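/- Let M = XXᵀ ∈ ℝ^{n×n} be a rank-r positive semidefinite matrix with X ∈ ℝ^{n×r}, κ = σ₁(M)/σ_r(M), and b = 𝒜(M). Assume 𝒜 satisfies 6r-RIP with constant δ_{6r} ≤ 1/10. Define the projected gradient iterates M̃₀ = 0 and, for each τ ≥ 0, let M̃_{τ+1} be any minimizer of ‖N − (M̃_τ − Σ_{k=1}^m (⟨A_k, M̃_τ⟩ − b_k) A_k)‖_F over positive semidefinite matrices N of rank at most r. Then for any integer T₀ ≥ log(√r·κ) + 2 and any U₀ ∈ ℝ^{n×r} with U₀U₀ᵀ = M̃_{T₀}, we have dist(U₀, X) ≤ (1/4)σ_r(X). -/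

import Mathlib

open Matrix

noncomputable def vnorm {ι : Type*} [Fintype ι] (v : ι → ℝ) : ℝ :=
  Real.sqrt (∑ i, v i ^ 2)

noncomputable def frob {α β : Type*} [Fintype α] [Fintype β] (M : Matrix α β ℝ) : ℝ :=
  Real.sqrt (∑ i, ∑ j, M i j ^ 2)

noncomputable def sval {α β : Type*} [Fintype α] [Fintype β] (M : Matrix α β ℝ) (k : ℕ) : ℝ :=
  sSup { t : ℝ | ∃ V : Submodule ℝ (β → ℝ), Module.finrank ℝ V = k ∧
    ∀ v ∈ V, t * vnorm v ≤ vnorm (M.mulVec v) }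

noncomputable def opNorm {α β : Type*} [Fintype α] [Fintype β] (M : Matrix α β ℝ) : ℝ :=
  sval M 1

noncomputable def pdist {α ρ : Type*} [Fintype α] [Fintype ρ] [DecidableEq ρ]
    (U X : Matrix α ρ ℝ) : ℝ :=
  sInf { d : ℝ | ∃ R : Matrix ρ ρ ℝ, Rᵀ * R = 1 ∧ d = frob (U - X * R) }

noncomputable def mip {α β : Type*} [Fintype α] [Fintype β] (A B : Matrix α β ℝ) : ℝ :=
  ∑ i, ∑ j, A i j * B i j

noncomputable def mapA {m : ℕ} {α β : Type*} [Fintype α] [Fintype β]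
    (A : Fin m → Matrix α β ℝ) (Z : Matrix α β ℝ) : Fin m → ℝ :=
  fun k => mip (A k) Z

def HasRIP {m n₁ n₂ : ℕ} (A : Fin m → Matrix (Fin n₁) (Fin n₂) ℝ) (s : ℕ) (δ : ℝ) : Prop :=
  ∀ Z : Matrix (Fin n₁) (Fin n₂) ℝ, Z.rank ≤ s →
    (1 - δ) * frob Z ^ 2 ≤ ∑ k, mapA A Z k ^ 2 ∧
      ∑ k, mapA A Z k ^ 2 ≤ (1 + δ) * frob Z ^ 2

noncomputable def gradU {m n₁ n₂ r : ℕ} (A : Fin m → Matrix (Fin n₁) (Fin n₂) ℝ)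
    (M : Matrix (Fin n₁) (Fin n₂) ℝ)
    (U : Matrix (Fin n₁) (Fin r) ℝ) (V : Matrix (Fin n₂) (Fin r) ℝ) :
    Matrix (Fin n₁) (Fin r) ℝ :=
  (∑ k, mip (A k) (U * Vᵀ - M) • (A k * V)) + (1 / 4 : ℝ) • (U * (Uᵀ * U - Vᵀ * V))

noncomputable def gradV {m n₁ n₂ r : ℕ} (A : Fin m → Matrix (Fin n₁) (Fin n₂) ℝ)
    (M : Matrix (Fin n₁) (Fin n₂) ℝ)
    (U : Matrix (Fin n₁) (Fin r) ℝ) (V : Matrix (Fin n₂) (Fin r) ℝ) :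
    Matrix (Fin n₂) (Fin r) ℝ :=
  (∑ k, mip (A k) (U * Vᵀ - M) • ((A k)ᵀ * U)) + (1 / 4 : ℝ) • (V * (Vᵀ * V - Uᵀ * U))

noncomputable def gradg {m n₁ n₂ r : ℕ} (A : Fin m → Matrix (Fin n₁) (Fin n₂) ℝ)
    (M : Matrix (Fin n₁) (Fin n₂) ℝ)
    (U : Matrix (Fin n₁) (Fin r) ℝ) (V : Matrix (Fin n₂) (Fin r) ℝ) :
    Matrix (Fin n₁ ⊕ Fin n₂) (Fin r) ℝ :=
  Matrix.fromRows (gradU A M U V) (gradV A M U V)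


section basicsx
variable {α β γ ρ₁ ρ₂ : Type*} [Fintype α] [Fintype β] [Fintype γ] [Fintype ρ₁] [Fintype ρ₂]

lemma mip_comm (A B : Matrix α β ℝ) : mip A B = mip B A := by
  unfold mip; congr 1; ext i; congr 1; ext j; ring

lemma mip_self_nonneg (A : Matrix α β ℝ) : 0 ≤ mip A A := by
  apply Finset.sum_nonneg; intro i _; apply Finset.sum_nonneg; intro j _
  exact mul_self_nonneg _

lemma frob_eq (A : Matrix α β ℝ) : frob A = Real.sqrt (mip A A) := by
  unfold frob mip; congr 1; apply Finset.sum_congr rfl; intro i _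
  apply Finset.sum_congr rfl; intro j _; ring

lemma frob_nonneg (A : Matrix α β ℝ) : 0 ≤ frob A := Real.sqrt_nonneg _

lemma frob_sq (A : Matrix α β ℝ) : frob A ^ 2 = mip A A := by
  rw [frob_eq, Real.sq_sqrt (mip_self_nonneg A)]

lemma mip_add_right (A B C : Matrix α β ℝ) : mip A (B + C) = mip A B + mip A C := by
  unfold mip; rw [← Finset.sum_add_distrib]
  apply Finset.sum_congr rfl; intro i _; rw [← Finset.sum_add_distrib]
  apply Finset.sum_congr rfl; intro j _; simp [Matrix.add_apply]; ring

lemma mip_add_left (A B C : Matrix α β ℝ) : mip (A + B) C = mip A C + mip B C := by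
  rw [mip_comm, mip_add_right, mip_comm C A, mip_comm C B]

lemma mip_neg_right (A B : Matrix α β ℝ) : mip A (-B) = - mip A B := by
  unfold mip; rw [← Finset.sum_neg_distrib]
  apply Finset.sum_congr rfl; intro i _; rw [← Finset.sum_neg_distrib]
  apply Finset.sum_congr rfl; intro j _; simp

lemma mip_sub_right (A B C : Matrix α β ℝ) : mip A (B - C) = mip A B - mip A C := by
  rw [sub_eq_add_neg, mip_add_right, mip_neg_right]; ring

lemma mip_sub_left (A B C : Matrix α β ℝ) : mip (A - B) C = mip A C - mip B C := by
  rw [mip_comm, mip_sub_right, mip_comm C A, mip_comm C B]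

lemma mip_smul_right (c : ℝ) (A B : Matrix α β ℝ) : mip A (c • B) = c * mip A B := by
  unfold mip; rw [Finset.mul_sum]
  apply Finset.sum_congr rfl; intro i _; rw [Finset.mul_sum]
  apply Finset.sum_congr rfl; intro j _; simp [Matrix.smul_apply]; ring

lemma mip_sum_right {ι : Type*} (s : Finset ι) (A : Matrix α β ℝ) (f : ι → Matrix α β ℝ) :
    mip A (∑ k ∈ s, f k) = ∑ k ∈ s, mip A (f k) := by
  classical
  induction s using Finset.induction with
  | empty => simp [mip]
  | insert _ _ h ih => rw [Finset.sum_insert h, Finset.sum_insert h, mip_add_right, ih]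

lemma F2_sub (A B : Matrix α β ℝ) :
    mip (A - B) (A - B) = mip A A - 2 * mip A B + mip B B := by
  rw [mip_sub_left, mip_sub_right, mip_sub_right, mip_comm B A]; ring

lemma F2_add (A B : Matrix α β ℝ) :
    mip (A + B) (A + B) = mip A A + 2 * mip A B + mip B B := by
  rw [mip_add_left, mip_add_right, mip_add_right, mip_comm B A]; ring

lemma mip_le (A B : Matrix α β ℝ) : mip A B ≤ frob A * frob B := by
  have h : mip A B ^ 2 ≤ mip A A * mip B B := by
    unfold mip
    have := Finset.sum_mul_sq_le_sq_mul_sq Finset.univ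
      (fun p : α × β => A p.1 p.2) (fun p : α × β => B p.1 p.2)
    simp only [Fintype.sum_prod_type] at this
    calc (∑ i : α, ∑ j : β, A i j * B i j) ^ 2 ≤ _ := this
      _ = (∑ i : α, ∑ j : β, A i j * A i j) * ∑ i : α, ∑ j : β, B i j * B i j := by
          congr 1 <;> [skip; skip] <;> apply Finset.sum_congr rfl <;> intro i _ <;>
            apply Finset.sum_congr rfl <;> intro j _ <;> ring
  nlinarith [mip_self_nonneg A, mip_self_nonneg B, frob_sq A, frob_sq B,
    frob_nonneg A, frob_nonneg B, sq_nonneg (mip A B), mul_nonneg (frob_nonneg A) (frob_nonneg B)]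

lemma frob_neg (A : Matrix α β ℝ) : frob (-A) = frob A := by
  unfold frob; congr 1; apply Finset.sum_congr rfl; intro i _
  apply Finset.sum_congr rfl; intro j _; simp

lemma mip_trace (A B : Matrix α β ℝ) : mip A B = (Aᵀ * B).trace := by
  unfold mip Matrix.trace
  rw [Finset.sum_comm]
  apply Finset.sum_congr rfl; intro j _
  simp [Matrix.diag, Matrix.mul_apply, Matrix.transpose_apply]

lemma mip_transpose (A B : Matrix α β ℝ) : mip Aᵀ Bᵀ = mip A B := by
  unfold mip; rw [Finset.sum_comm]; rfl

lemma mip_mul_mul_transpose (P : Matrix α ρ₁ ℝ) (Q : Matrix α ρ₂ ℝ) :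
    mip (P * Pᵀ) (Q * Qᵀ) = mip (Pᵀ * Q) (Pᵀ * Q) := by
  rw [mip_trace, mip_trace, Matrix.transpose_mul, Matrix.transpose_transpose,
    Matrix.transpose_mul, Matrix.transpose_transpose]
  calc (P * Pᵀ * (Q * Qᵀ)).trace = (P * (Pᵀ * (Q * Qᵀ))).trace := by rw [Matrix.mul_assoc]
    _ = ((Pᵀ * (Q * Qᵀ)) * P).trace := Matrix.trace_mul_comm _ _
    _ = ((Pᵀ * Q) * (Qᵀ * P)).trace := by
        rw [Matrix.mul_assoc, Matrix.mul_assoc, Matrix.mul_assoc]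
    _ = ((Qᵀ * P) * (Pᵀ * Q)).trace := Matrix.trace_mul_comm _ _

lemma mip_ortho_left {p : ℕ} (U : Matrix (Fin p) (Fin p) ℝ) (hU : Uᵀ * U = 1)
    (A B : Matrix (Fin p) β ℝ) : mip (U * A) (U * B) = mip A B := by
  rw [mip_trace, Matrix.transpose_mul, Matrix.mul_assoc, ← Matrix.mul_assoc Uᵀ U B, hU,
    Matrix.one_mul, ← mip_trace]

lemma mip_diagonal {p : ℕ} (d e : Fin p → ℝ) :
    mip (Matrix.diagonal d) (Matrix.diagonal e) = ∑ i, d i * e i := by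
  unfold mip
  apply Finset.sum_congr rfl; intro i _
  rw [Finset.sum_eq_single i]
  · simp
  · intro j _ hji; simp [Matrix.diagonal_apply_ne' _ hji]
  · simp

private lemma triple_comm {f : α → β → γ → ℝ} :
    ∑ y : γ, ∑ x : β, ∑ i : α, f i x y = ∑ i : α, ∑ x : β, ∑ y : γ, f i x y := by
  rw [Finset.sum_comm]
  have h : ∀ x : β, ∑ y : γ, ∑ i : α, f i x y = ∑ i : α, ∑ y : γ, f i x y :=
    fun x => Finset.sum_comm
  simp_rw [h]
  exact Finset.sum_comm

lemma mip_transpose_mul (Δ : Matrix α β ℝ) (S : Matrix β β ℝ) :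
    mip (Δᵀ * Δ) S = ∑ i, (fun a => Δ i a) ⬝ᵥ (S *ᵥ (fun a => Δ i a)) := by
  unfold mip
  simp only [Matrix.mul_apply, Matrix.transpose_apply, dotProduct, Matrix.mulVec,
    Finset.sum_mul, Finset.mul_sum]
  rw [triple_comm]
  apply Finset.sum_congr rfl; intro i _
  rw [Finset.sum_comm]
  apply Finset.sum_congr rfl; intro a _
  apply Finset.sum_congr rfl; intro b _
  ring

lemma mip_self_diag (Δ : Matrix α β ℝ) :
    mip Δ Δ = ∑ i, (fun a => Δ i a) ⬝ᵥ (fun a => Δ i a) := by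
  unfold mip dotProduct; rfl

lemma dot_mulVec_left (N : Matrix α β ℝ) (v : α → ℝ) (w : β → ℝ) :
    v ⬝ᵥ (N *ᵥ w) = (Nᵀ *ᵥ v) ⬝ᵥ w := by
  rw [Matrix.dotProduct_mulVec, Matrix.mulVec_transpose]

lemma mulVec_dot_right (N : Matrix α β ℝ) (w : β → ℝ) (v : α → ℝ) :
    (N *ᵥ w) ⬝ᵥ v = w ⬝ᵥ (Nᵀ *ᵥ v) := by
  rw [dotProduct_comm, dot_mulVec_left, dotProduct_comm]

end basicsx

section spectralx
variable {p : ℕ} {β : Type*} [Fintype β]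

lemma quad_of_decomp (U : Matrix (Fin p) (Fin p) ℝ) (d : Fin p → ℝ) (v : Fin p → ℝ) :
    v ⬝ᵥ ((U * Matrix.diagonal d * Uᵀ) *ᵥ v) = ∑ i, d i * ((Uᵀ *ᵥ v) i)^2 := by
  rw [← Matrix.mulVec_mulVec, ← Matrix.mulVec_mulVec, dot_mulVec_left]
  unfold dotProduct
  apply Finset.sum_congr rfl; intro i _
  rw [Matrix.mulVec_diagonal]
  ring

lemma norm_of_decomp (U : Matrix (Fin p) (Fin p) ℝ) (hU : U * Uᵀ = 1) (v : Fin p → ℝ) :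
    ∑ i, ((Uᵀ *ᵥ v) i)^2 = ∑ i, (v i)^2 := by
  have h1 : ∑ i, ((Uᵀ *ᵥ v) i)^2 = (Uᵀ *ᵥ v) ⬝ᵥ (Uᵀ *ᵥ v) := by
    unfold dotProduct; apply Finset.sum_congr rfl; intro i _; ring
  have h2 : ∑ i, (v i)^2 = v ⬝ᵥ v := by
    unfold dotProduct; apply Finset.sum_congr rfl; intro i _; ring
  rw [h1, h2, ← dot_mulVec_left, Matrix.mulVec_mulVec, hU, Matrix.one_mulVec]

lemma decomp_mul (U : Matrix (Fin p) (Fin p) ℝ) (hU : Uᵀ * U = 1) (d e : Fin p → ℝ) :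
    (U * Matrix.diagonal d * Uᵀ) * (U * Matrix.diagonal e * Uᵀ)
      = U * Matrix.diagonal (fun i => d i * e i) * Uᵀ := by
  have hde : Matrix.diagonal d * Matrix.diagonal e = Matrix.diagonal (fun i => d i * e i) := by
    rw [Matrix.diagonal_mul_diagonal]
  calc U * Matrix.diagonal d * Uᵀ * (U * Matrix.diagonal e * Uᵀ)
      = U * Matrix.diagonal d * (Uᵀ * U) * Matrix.diagonal e * Uᵀ := by
        simp only [Matrix.mul_assoc]
    _ = U * Matrix.diagonal (fun i => d i * e i) * Uᵀ := by
        rw [hU, Matrix.mul_one, Matrix.mul_assoc U, hde]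

lemma F2_decomp (U : Matrix (Fin p) (Fin p) ℝ) (hU : Uᵀ * U = 1)
    (d : Fin p → ℝ) :
    mip (U * Matrix.diagonal d * Uᵀ) (U * Matrix.diagonal d * Uᵀ) = ∑ i, (d i)^2 := by
  rw [Matrix.mul_assoc, mip_ortho_left U hU, ← mip_transpose]
  simp only [Matrix.transpose_mul, Matrix.transpose_transpose, Matrix.diagonal_transpose]
  rw [mip_ortho_left U hU, mip_diagonal]
  apply Finset.sum_congr rfl; intro i _; ring

lemma eigcol (U : Matrix (Fin p) (Fin p) ℝ) (hU : Uᵀ * U = 1) (d : Fin p → ℝ) (i : Fin p) :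
    (U * Matrix.diagonal d * Uᵀ) *ᵥ (fun j => U j i) = d i • (fun j => U j i) := by
  have hcol : (fun j => U j i) = U *ᵥ (Pi.single i 1) := by
    ext j; rw [Matrix.mulVec_single]; simp
  rw [hcol, Matrix.mulVec_mulVec, Matrix.mul_assoc, Matrix.mul_assoc, hU, Matrix.mul_one,
    ← Matrix.mulVec_mulVec, Matrix.diagonal_mulVec_single, mul_one, Matrix.mulVec_single]
  ext j
  simp [Matrix.mulVec_single, mul_comm]

lemma col_unit (U : Matrix (Fin p) (Fin p) ℝ) (hU : Uᵀ * U = 1) (i : Fin p) :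
    (fun j => U j i) ⬝ᵥ (fun j => U j i) = 1 := by
  have h := congrFun (congrFun hU i) i
  simp only [Matrix.mul_apply, Matrix.transpose_apply, Matrix.one_apply_eq] at h
  unfold dotProduct
  exact h

lemma exists_spectral (C : Matrix (Fin p) (Fin p) ℝ) (hC : C.IsHermitian) :
    ∃ (U : Matrix (Fin p) (Fin p) ℝ) (d : Fin p → ℝ),
      Uᵀ * U = 1 ∧ U * Uᵀ = 1 ∧ C = U * Matrix.diagonal d * Uᵀ := by
  refine ⟨(hC.eigenvectorUnitary : Matrix (Fin p) (Fin p) ℝ), hC.eigenvalues, ?_, ?_, ?_⟩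
  · have := hC.eigenvectorUnitary.2
    rw [Matrix.mem_unitaryGroup_iff'] at this
    simpa [Matrix.star_eq_conjTranspose, Matrix.conjTranspose_eq_transpose_of_trivial] using this
  · have := hC.eigenvectorUnitary.2
    rw [Matrix.mem_unitaryGroup_iff] at this
    simpa [Matrix.star_eq_conjTranspose, Matrix.conjTranspose_eq_transpose_of_trivial] using this
  · have h := hC.spectral_theorem
    simpa [Matrix.star_eq_conjTranspose, Matrix.conjTranspose_eq_transpose_of_trivial,
      Function.comp] using h

end spectralx

lemma rank_sub_le' {n₁ n₂ : ℕ} (A B : Matrix (Fin n₁) (Fin n₂) ℝ) :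
    (A - B).rank ≤ A.rank + B.rank := by
  have hadd : ∀ (C D : Matrix (Fin n₁) (Fin n₂) ℝ), (C + D).rank ≤ C.rank + D.rank := by
    intro C D
    unfold Matrix.rank
    have hr : LinearMap.range (C + D).mulVecLin ≤
        LinearMap.range C.mulVecLin ⊔ LinearMap.range D.mulVecLin := by
      rintro x ⟨v, rfl⟩
      rw [Matrix.mulVecLin_add]
      exact Submodule.add_mem_sup (LinearMap.mem_range_self _ v) (LinearMap.mem_range_self _ v)
    calc Module.finrank ℝ (LinearMap.range (C + D).mulVecLin)
        ≤ Module.finrank ℝ ↥(LinearMap.range C.mulVecLin ⊔ LinearMap.range D.mulVecLin) :=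
          Submodule.finrank_mono hr
      _ ≤ Module.finrank ℝ (LinearMap.range C.mulVecLin)
          + Module.finrank ℝ (LinearMap.range D.mulVecLin) :=
          Submodule.finrank_add_le_finrank_add_finrank _ _
  have hneg : (-B).rank = B.rank := by
    unfold Matrix.rank
    have hm : (-B).mulVecLin = -(B.mulVecLin) := by
      ext v
      simp [Matrix.mulVecLin_apply, Matrix.neg_mulVec]
    rw [hm, LinearMap.range_neg]
  calc (A - B).rank = (A + (-B)).rank := by rw [sub_eq_add_neg]
    _ ≤ A.rank + (-B).rank := hadd A (-B)
    _ = A.rank + B.rank := by rw [hneg]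

lemma rank_add_le' {n₁ n₂ : ℕ} (A B : Matrix (Fin n₁) (Fin n₂) ℝ) :
    (A + B).rank ≤ A.rank + B.rank := by
  have h := rank_sub_le' A (-B)
  rw [sub_neg_eq_add] at h
  calc (A + B).rank ≤ A.rank + (-B).rank := h
    _ = A.rank + B.rank := by
        have hneg : (-B).rank = B.rank := by
          unfold Matrix.rank
          have hm : (-B).mulVecLin = -(B.mulVecLin) := by
            ext v
            simp [Matrix.mulVecLin_apply, Matrix.neg_mulVec]
          rw [hm, LinearMap.range_neg]
        rw [hneg]

section vnx
variable {ι κ : Type*} [Fintype ι] [Fintype κ]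

lemma vnorm_nonneg (v : ι → ℝ) : 0 ≤ vnorm v := Real.sqrt_nonneg _

lemma dot_self_nonneg (v : ι → ℝ) : 0 ≤ v ⬝ᵥ v :=
  Finset.sum_nonneg fun i _ => mul_self_nonneg _

lemma vnorm_eq (v : ι → ℝ) : vnorm v = Real.sqrt (v ⬝ᵥ v) := by
  unfold vnorm dotProduct
  congr 1
  exact Finset.sum_congr rfl fun i _ => sq (v i)

lemma vnorm_sq (v : ι → ℝ) : vnorm v ^ 2 = v ⬝ᵥ v := by
  rw [vnorm_eq, Real.sq_sqrt (dot_self_nonneg v)]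

lemma vnorm_pos {v : ι → ℝ} (hv : v ≠ 0) : 0 < vnorm v := by
  unfold vnorm
  apply Real.sqrt_pos.2
  obtain ⟨i, hi⟩ := Function.ne_iff.1 hv
  have hvi : v i ≠ 0 := hi
  have : (0:ℝ) < v i ^ 2 := by positivity
  exact Finset.sum_pos' (fun j _ => sq_nonneg _) ⟨i, Finset.mem_univ i, this⟩

lemma vnorm_smul (c : ℝ) (v : ι → ℝ) : vnorm (c • v) = |c| * vnorm v := by
  unfold vnorm
  rw [← Real.sqrt_sq_eq_abs, ← Real.sqrt_mul (sq_nonneg c), Finset.mul_sum]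
  congr 1
  exact Finset.sum_congr rfl fun i _ => by simp [Pi.smul_apply]; ring

lemma vnorm_mulVec_le (M : Matrix ι κ ℝ) (v : κ → ℝ) :
    vnorm (M *ᵥ v) ≤ frob M * vnorm v := by
  unfold vnorm frob
  rw [← Real.sqrt_mul (by positivity)]
  apply Real.sqrt_le_sqrt
  rw [Finset.sum_mul]
  apply Finset.sum_le_sum
  intro i _
  have h := Finset.sum_mul_sq_le_sq_mul_sq Finset.univ (fun j => M i j) v
  calc (M *ᵥ v) i ^ 2 = (∑ j, M i j * v j) ^ 2 := rfl
    _ ≤ (∑ j, M i j ^ 2) * ∑ j, v j ^ 2 := h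

end vnx

lemma le_sval {p q k : ℕ} (M : Matrix (Fin p) (Fin q) ℝ) (hk : 0 < k)
    (V : Submodule ℝ (Fin q → ℝ)) (hV : Module.finrank ℝ V = k) (t : ℝ)
    (ht : ∀ v ∈ V, t * vnorm v ≤ vnorm (M *ᵥ v)) : t ≤ sval M k := by
  apply le_csSup
  · refine ⟨frob M, ?_⟩
    rintro s ⟨V', hV', hs⟩
    have : Nontrivial V' := by
      rw [← Module.finrank_pos_iff (R := ℝ)]
      omega
    obtain ⟨x, hx⟩ := exists_ne (0 : V')
    have hx0 : (x : Fin q → ℝ) ≠ 0 := fun h => hx (Subtype.ext h)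
    have h1 := hs x x.2
    have h2 := vnorm_mulVec_le M (x : Fin q → ℝ)
    have h3 : 0 < vnorm (x : Fin q → ℝ) := vnorm_pos hx0
    nlinarith
  · exact ⟨V, hV, ht⟩

lemma mip_zero_left {α β : Type*} [Fintype α] [Fintype β] (B : Matrix α β ℝ) :
    mip (0 : Matrix α β ℝ) B = 0 := by
  unfold mip; simp

lemma dot_self_eq_sum_sq {ι : Type*} [Fintype ι] (v : ι → ℝ) : v ⬝ᵥ v = ∑ i, v i ^ 2 := by
  unfold dotProduct
  exact Finset.sum_congr rfl fun i _ => (sq (v i)).symm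

lemma quad_ge_neg_frob {p : ℕ} (E : Matrix (Fin p) (Fin p) ℝ) (x : Fin p → ℝ) :
    -(frob E * (x ⬝ᵥ x)) ≤ x ⬝ᵥ (E *ᵥ x) := by
  set O : Matrix (Fin p) (Fin p) ℝ := Matrix.of fun i j => x i * x j with hO
  have hmip : ∀ E' : Matrix (Fin p) (Fin p) ℝ, mip E' O = x ⬝ᵥ (E' *ᵥ x) := by
    intro E'
    unfold mip dotProduct Matrix.mulVec
    simp only [hO, Matrix.of_apply, Finset.mul_sum]
    apply Finset.sum_congr rfl; intro i _
    unfold dotProduct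
    rw [Finset.mul_sum]
    apply Finset.sum_congr rfl; intro j _
    ring
  have hOO : mip O O = (x ⬝ᵥ x)^2 := by
    unfold mip dotProduct
    rw [sq, Finset.sum_mul]
    apply Finset.sum_congr rfl; intro i _
    rw [Finset.mul_sum]
    apply Finset.sum_congr rfl; intro j _
    simp only [hO, Matrix.of_apply]
    ring
  have hfrobO : frob O = x ⬝ᵥ x := by
    rw [frob_eq, hOO, Real.sqrt_sq (dot_self_nonneg x)]
  have h := mip_le (-E) O
  rw [frob_neg, hfrobO, hmip] at h
  have hneg : (-E) *ᵥ x = -(E *ᵥ x) := Matrix.neg_mulVec x E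
  rw [hneg, dotProduct_neg] at h
  linarith

lemma rip_cross {m n r : ℕ} {A : Fin m → Matrix (Fin n) (Fin n) ℝ} {δ : ℝ}
    (hRIP : HasRIP A (6*r) δ) (hδ : δ ≤ 1/10) (W Z : Matrix (Fin n) (Fin n) ℝ)
    (hW : W.rank ≤ 2*r) (hZ : Z.rank ≤ 2*r) :
    mip W Z - ∑ k, mapA A W k * mapA A Z k ≤ (1/20) * (mip W W + mip Z Z) := by
  have hWZ : (W+Z).rank ≤ 6*r := le_trans (rank_add_le' W Z) (by omega)
  have hWZ' : (W-Z).rank ≤ 6*r := le_trans (rank_sub_le' W Z) (by omega)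
  obtain ⟨h1, -⟩ := hRIP (W+Z) hWZ
  obtain ⟨-, h2⟩ := hRIP (W-Z) hWZ'
  have e1 : ∀ k, mapA A (W+Z) k = mapA A W k + mapA A Z k := by
    intro k; unfold mapA; exact mip_add_right _ _ _
  have e2 : ∀ k, mapA A (W-Z) k = mapA A W k - mapA A Z k := by
    intro k; unfold mapA; exact mip_sub_right _ _ _
  have hid : ∑ k, mapA A (W+Z) k ^ 2 - ∑ k, mapA A (W-Z) k ^ 2
      = 4 * ∑ k, mapA A W k * mapA A Z k := by
    rw [← Finset.sum_sub_distrib, Finset.mul_sum]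
    apply Finset.sum_congr rfl; intro k _
    rw [e1 k, e2 k]; ring
  have f1 : frob (W+Z) ^ 2 = mip W W + 2 * mip W Z + mip Z Z := by rw [frob_sq, F2_add]
  have f2 : frob (W-Z) ^ 2 = mip W W - 2 * mip W Z + mip Z Z := by rw [frob_sq, F2_sub]
  rw [f1] at h1; rw [f2] at h2
  have hnn : 0 ≤ mip W W + mip Z Z := by
    have := mip_self_nonneg W; have := mip_self_nonneg Z; linarith
  nlinarith [mul_le_mul_of_nonneg_right hδ hnn]

lemma sval_one_ge {n r : ℕ} (X : Matrix (Fin n) (Fin r) ℝ) (L : ℝ) (hL : 0 < L)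
    (w : Fin r → ℝ) (hw : (Xᵀ*X) *ᵥ w = L • w) (hwn : w ⬝ᵥ w = 1) :
    L ≤ sval (X * Xᵀ) 1 := by
  set u := X *ᵥ w with hu
  have hXTu : Xᵀ *ᵥ u = L • w := by
    rw [hu, Matrix.mulVec_mulVec, hw]
  have huu : u ⬝ᵥ u = L := by
    rw [hu, mulVec_dot_right, ← hu, hXTu, dotProduct_smul]
    simp [hwn]
  have hu0 : u ≠ 0 := by
    intro h
    rw [h] at huu
    simp at huu
    exact hL.ne huu
  have hMu : (X*Xᵀ) *ᵥ u = L • u := by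
    rw [← Matrix.mulVec_mulVec, hXTu, Matrix.mulVec_smul, hu]
  apply le_sval _ (by norm_num) (Submodule.span ℝ {u}) (finrank_span_singleton hu0)
  intro v hv
  obtain ⟨c, rfl⟩ := Submodule.mem_span_singleton.1 hv
  have h1 : (X*Xᵀ) *ᵥ (c • u) = (c * L) • u := by
    rw [Matrix.mulVec_smul, hMu, smul_smul]
  rw [h1, vnorm_smul, vnorm_smul, abs_mul, abs_of_pos hL]
  ring_nf
  nlinarith [vnorm_nonneg u, abs_nonneg c]

lemma sval_Xr_ge {n r : ℕ} (hr : 0 < r) (X : Matrix (Fin n) (Fin r) ℝ) (lam : ℝ) (hlam : 0 ≤ lam)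
    (hq : ∀ v : Fin r → ℝ, lam * (v ⬝ᵥ v) ≤ (X *ᵥ v) ⬝ᵥ (X *ᵥ v)) :
    Real.sqrt lam ≤ sval X r := by
  apply le_sval X hr ⊤ (by rw [finrank_top, Module.finrank_fin_fun])
  intro v _
  rw [vnorm_eq, vnorm_eq, ← Real.sqrt_mul hlam]
  exact Real.sqrt_le_sqrt (hq v)

lemma sval_M_r_ge {n r : ℕ} (X : Matrix (Fin n) (Fin r) ℝ) (hr : 0 < r) (lam : ℝ) (hlam : 0 ≤ lam)
    (hrange : Module.finrank ℝ (LinearMap.range X.mulVecLin) = r)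
    (hq : ∀ w : Fin r → ℝ, lam^2 * (w ⬝ᵥ ((Xᵀ*X) *ᵥ w)) ≤
      ((Xᵀ*X) *ᵥ w) ⬝ᵥ ((Xᵀ*X) *ᵥ ((Xᵀ*X) *ᵥ w))) :
    lam ≤ sval (X*Xᵀ) r := by
  apply le_sval _ hr (LinearMap.range X.mulVecLin) hrange
  rintro v ⟨w, rfl⟩
  rw [Matrix.mulVecLin_apply]
  have h1 : (X*Xᵀ) *ᵥ (X *ᵥ w) = X *ᵥ ((Xᵀ*X) *ᵥ w) := by
    rw [Matrix.mulVec_mulVec, Matrix.mulVec_mulVec, Matrix.mul_assoc]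
  have hX : ∀ c : Fin r → ℝ, (X *ᵥ c) ⬝ᵥ (X *ᵥ c) = c ⬝ᵥ ((Xᵀ*X) *ᵥ c) := by
    intro c
    rw [mulVec_dot_right, Matrix.mulVec_mulVec]
  rw [h1, vnorm_eq, vnorm_eq, hX, hX, ← Real.sqrt_sq hlam, ← Real.sqrt_mul (sq_nonneg lam)]
  exact Real.sqrt_le_sqrt (hq w)

lemma sval_M_r_le {n r : ℕ} (X : Matrix (Fin n) (Fin r) ℝ) (hr : 0 < r) (lam : ℝ) (hlam : 0 < lam)
    (hrange : Module.finrank ℝ (LinearMap.range X.mulVecLin) = r)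
    (w₀ : Fin r → ℝ) (hw₀ : (Xᵀ*X) *ᵥ w₀ = lam • w₀) (hw₀n : w₀ ⬝ᵥ w₀ = 1) :
    sval (X*Xᵀ) r ≤ lam := by
  apply csSup_le
  · exact ⟨0, LinearMap.range X.mulVecLin, hrange, fun v _ => by
      simpa using vnorm_nonneg ((X*Xᵀ) *ᵥ v)⟩
  rintro t ⟨V, hV, htV⟩
  by_contra hlt
  push_neg at hlt
  have ht0 : 0 < t := lt_trans hlam hlt
  set ψ : V →ₗ[ℝ] (Fin r → ℝ) := (Xᵀ).mulVecLin.comp V.subtype with hψ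
  have hker : LinearMap.ker ψ = ⊥ := by
    by_contra hk
    obtain ⟨x, hxmem, hx0⟩ := Submodule.exists_mem_ne_zero_of_ne_bot hk
    have hψx0 : (x : Fin n → ℝ) ᵥ* X = 0 := by
      have := (LinearMap.mem_ker.1 hxmem)
      simpa [hψ, Matrix.mulVecLin_apply, Matrix.mulVec_transpose] using this
    have hψx : Xᵀ *ᵥ (x : Fin n → ℝ) = 0 := by
      rw [Matrix.mulVec_transpose]; exact hψx0
    have hMx : (X*Xᵀ) *ᵥ (x : Fin n → ℝ) = 0 := by
      rw [← Matrix.mulVec_mulVec, hψx, Matrix.mulVec_zero]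
    have h := htV x x.2
    rw [hMx] at h
    have hx0' : (x : Fin n → ℝ) ≠ 0 := fun h' => hx0 (Subtype.ext h')
    have hvn := vnorm_pos hx0'
    have : vnorm (0 : Fin n → ℝ) = 0 := by simp [vnorm]
    rw [this] at h
    nlinarith
  have hinj := LinearMap.ker_eq_bot.1 hker
  have hrangeψ : LinearMap.range ψ = ⊤ := by
    apply Submodule.eq_top_of_finrank_eq
    rw [LinearMap.finrank_range_of_inj hinj, hV, Module.finrank_fin_fun]
  obtain ⟨x, hx⟩ := LinearMap.range_eq_top.1 hrangeψ w₀
  set v : Fin n → ℝ := (x : Fin n → ℝ) with hvdef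
  have hXTv : Xᵀ *ᵥ v = w₀ := by
    rw [Matrix.mulVec_transpose]
    have := hx
    simpa [hψ, Matrix.mulVecLin_apply, Matrix.mulVec_transpose, hvdef] using this
  have hMv : (X*Xᵀ) *ᵥ v = X *ᵥ w₀ := by
    rw [← Matrix.mulVec_mulVec, hXTv]
  have hXw : (X *ᵥ w₀) ⬝ᵥ (X *ᵥ w₀) = lam := by
    rw [mulVec_dot_right, Matrix.mulVec_mulVec, hw₀, dotProduct_smul]
    simp [hw₀n]
  set u : Fin n → ℝ := lam⁻¹ • (X *ᵥ w₀) with hudef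
  have hXTu : Xᵀ *ᵥ u = w₀ := by
    rw [hudef, Matrix.mulVec_smul, Matrix.mulVec_mulVec, hw₀, smul_smul,
      inv_mul_cancel₀ hlam.ne', one_smul]
  have huu : u ⬝ᵥ u = lam⁻¹ := by
    rw [hudef, smul_dotProduct, dotProduct_smul, hXw, smul_eq_mul, smul_eq_mul]
    field_simp
  have hcross : u ⬝ᵥ (v - u) = 0 := by
    rw [hudef, smul_dotProduct, smul_eq_mul]
    have : (X *ᵥ w₀) ⬝ᵥ (v - u) = w₀ ⬝ᵥ (Xᵀ *ᵥ (v - u)) := mulVec_dot_right _ _ _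
    rw [this, Matrix.mulVec_sub, hXTv, hXTu, sub_self, dotProduct_zero, mul_zero]
  have hvv : lam⁻¹ ≤ v ⬝ᵥ v := by
    have hexp : v ⬝ᵥ v = (v - u) ⬝ᵥ (v - u) + 2 * (u ⬝ᵥ (v - u)) + u ⬝ᵥ u := by
      simp only [sub_dotProduct, dotProduct_sub]
      rw [dotProduct_comm u v]
      ring
    rw [hexp, hcross, huu]
    have := dot_self_nonneg (v - u)
    linarith
  have h := htV v x.2
  rw [hMv] at h
  have h2 : vnorm (X *ᵥ w₀) = Real.sqrt lam := by rw [vnorm_eq, hXw]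
  have h3 : Real.sqrt lam⁻¹ ≤ vnorm v := by
    rw [vnorm_eq]
    exact Real.sqrt_le_sqrt hvv
  rw [h2] at h
  have hsp : 0 < Real.sqrt lam := Real.sqrt_pos.2 hlam
  have h4 : t * Real.sqrt lam⁻¹ ≤ Real.sqrt lam := by
    calc t * Real.sqrt lam⁻¹ ≤ t * vnorm v := by nlinarith
      _ ≤ Real.sqrt lam := h
  rw [Real.sqrt_inv] at h4
  have h5 : t ≤ Real.sqrt lam * Real.sqrt lam := by
    have := mul_le_mul_of_nonneg_right h4 hsp.le
    rw [mul_assoc, inv_mul_cancel₀ hsp.ne', mul_one] at this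
    linarith
  rw [Real.mul_self_sqrt hlam.le] at h5
  linarith

set_option maxHeartbeats 2000000 in
/-- Procrustes Flow initialization, PSD case. -/
theorem procrustes_flow_psd_initialization {n r m : ℕ}
    (A : Fin m → Matrix (Fin n) (Fin n) ℝ)
    (X : Matrix (Fin n) (Fin r) ℝ)
    (hrank : (X * Xᵀ).rank = r)
    (δ : ℝ) (hRIP : HasRIP A (6 * r) δ) (hδ : δ ≤ 1 / 10)
    (Mt : ℕ → Matrix (Fin n) (Fin n) ℝ) (h0 : Mt 0 = 0)
    (hstep : ∀ τ : ℕ,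
      (Mt (τ + 1)).PosSemidef ∧ (Mt (τ + 1)).rank ≤ r ∧
      ∀ N : Matrix (Fin n) (Fin n) ℝ, N.PosSemidef → N.rank ≤ r →
        frob (Mt (τ + 1) - (Mt τ - ∑ k, (mapA A (Mt τ) k - mapA A (X * Xᵀ) k) • A k)) ≤
          frob (N - (Mt τ - ∑ k, (mapA A (Mt τ) k - mapA A (X * Xᵀ) k) • A k)))
    (T₀ : ℕ)
    (hT : Real.log (Real.sqrt r * (sval (X * Xᵀ) 1 / sval (X * Xᵀ) r)) + 2 ≤ (T₀ : ℝ))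
    (U₀ : Matrix (Fin n) (Fin r) ℝ) (hU₀ : U₀ * U₀ᵀ = Mt T₀) :
    pdist U₀ X ≤ (1 / 4) * sval X r := by
  classical
  rcases Nat.eq_zero_or_pos r with hr0 | hr
  · subst hr0
    have hs : sval X 0 = 0 := by
      unfold sval
      have hset : { t : ℝ | ∃ V : Submodule ℝ (Fin 0 → ℝ), Module.finrank ℝ V = 0 ∧
          ∀ v ∈ V, t * vnorm v ≤ vnorm (X.mulVec v) } = Set.univ := by
        ext t
        simp only [Set.mem_setOf_eq, Set.mem_univ, iff_true]
        refine ⟨⊥, finrank_bot ℝ _, ?_⟩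
        intro v _
        have hv : vnorm v = 0 := by unfold vnorm; simp
        have hv2 : vnorm (X.mulVec v) = 0 := by
          unfold vnorm
          have : ∀ i, X.mulVec v i = 0 := by
            intro i; unfold Matrix.mulVec dotProduct; simp
          simp [this]
        rw [hv, hv2, mul_zero]
      rw [hset]
      exact Real.sSup_univ
    rw [hs, mul_zero]
    unfold pdist
    apply csInf_le
    · exact ⟨0, by rintro dd ⟨Rq, hRq, rfl⟩; exact frob_nonneg _⟩
    · refine ⟨1, by simp, ?_⟩
      unfold frob
      simp
  -- main case
  set M := X * Xᵀ with hM
  have hMpsd : M.PosSemidef := by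
    have h := Matrix.posSemidef_self_mul_conjTranspose X
    rwa [Matrix.conjTranspose_eq_transpose_of_trivial] at h
  have hMrank : M.rank ≤ r := le_of_eq hrank
  have hrankMt : ∀ τ, (Mt τ).rank ≤ r := by
    intro τ
    cases τ with
    | zero => rw [h0, Matrix.rank_zero]; exact Nat.zero_le r
    | succ τ => exact (hstep τ).2.1
  -- one-step contraction
  have contract : ∀ τ, mip (Mt (τ+1) - M) (Mt (τ+1) - M) ≤ (1/9) * mip (Mt τ - M) (Mt τ - M) := by
    intro τ
    set W := Mt (τ+1) - M with hW
    set Z := Mt τ - M with hZ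
    have hWrank : W.rank ≤ 2*r := by
      rw [hW]
      refine le_trans (rank_sub_le' _ _) ?_
      have h1 := hrankMt (τ+1)
      omega
    have hZrank : Z.rank ≤ 2*r := by
      rw [hZ]
      refine le_trans (rank_sub_le' _ _) ?_
      have h1 := hrankMt τ
      omega
    set Gm := Mt τ - ∑ k, (mapA A (Mt τ) k - mapA A M k) • A k with hGm
    have hmin := (hstep τ).2.2 M hMpsd hMrank
    have hsq : mip (Mt (τ+1) - Gm) (Mt (τ+1) - Gm) ≤ mip (M - Gm) (M - Gm) := by
      rw [← frob_sq, ← frob_sq]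
      exact pow_le_pow_left₀ (frob_nonneg _) hmin 2
    have hdecomp : Mt (τ+1) - Gm = W + (M - Gm) := by rw [hW]; abel
    have hC : M - Gm = -Z + ∑ k, mapA A Z k • A k := by
      have hsum : ∑ k, (mapA A (Mt τ) k - mapA A M k) • A k = ∑ k, mapA A Z k • A k := by
        apply Finset.sum_congr rfl; intro k _
        congr 1
        show mapA A (Mt τ) k - mapA A M k = mapA A Z k
        unfold mapA
        rw [hZ, mip_sub_right]
      rw [hGm, hsum, hZ]
      abel
    have hkey : mip W W ≤ 2 * (mip W Z - ∑ k, mapA A W k * mapA A Z k) := by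
      rw [hdecomp, F2_add] at hsq
      have hWC : mip W (M - Gm) = -(mip W Z) + ∑ k, mapA A Z k * mapA A W k := by
        rw [hC, mip_add_right, mip_neg_right, mip_sum_right]
        congr 1
        apply Finset.sum_congr rfl; intro k _
        rw [mip_smul_right]
        congr 1
        exact mip_comm W (A k)
      rw [hWC] at hsq
      have hcs : ∑ k, mapA A Z k * mapA A W k = ∑ k, mapA A W k * mapA A Z k := by
        apply Finset.sum_congr rfl; intro k _; ring
      rw [hcs] at hsq
      linarith
    have hcross := rip_cross hRIP hδ W Z hWrank hZrank
    have hWnn := mip_self_nonneg W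
    have hZnn := mip_self_nonneg Z
    linarith
  -- geometric decay
  have decay : ∀ τ, mip (Mt τ - M) (Mt τ - M) ≤ (1/9:ℝ)^τ * mip M M := by
    intro τ
    induction τ with
    | zero =>
      rw [h0, pow_zero, one_mul, F2_sub, mip_zero_left]
      have : mip (0 : Matrix (Fin n) (Fin n) ℝ) M = 0 := mip_zero_left M
      rw [this]
      linarith [mip_self_nonneg M]
    | succ τ ih =>
      calc mip (Mt (τ+1) - M) (Mt (τ+1) - M) ≤ (1/9) * mip (Mt τ - M) (Mt τ - M) := contract τ
        _ ≤ (1/9) * ((1/9:ℝ)^τ * mip M M) := by linarith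
        _ = (1/9:ℝ)^(τ+1) * mip M M := by ring
  -- spectral setup for G = XᵀX
  set G := Xᵀ * X with hGdef
  have hGherm : G.IsHermitian := by
    unfold Matrix.IsHermitian
    rw [Matrix.conjTranspose_eq_transpose_of_trivial, hGdef, Matrix.transpose_mul,
      Matrix.transpose_transpose]
  obtain ⟨Uq, dq, hU1, hU2, hGspec⟩ := exists_spectral G hGherm
  have hXquad : ∀ v : Fin r → ℝ, v ⬝ᵥ (G *ᵥ v) = (X *ᵥ v) ⬝ᵥ (X *ᵥ v) := by
    intro v
    rw [hGdef, ← Matrix.mulVec_mulVec, dot_mulVec_left, Matrix.transpose_transpose]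
  have hne : (Finset.univ : Finset (Fin r)).Nonempty := ⟨⟨0, hr⟩, Finset.mem_univ _⟩
  set lam := Finset.univ.inf' hne dq with hlamdef
  set Lam := Finset.univ.sup' hne dq with hLamdef
  have hlam_le : ∀ i, lam ≤ dq i := fun i => Finset.inf'_le _ (Finset.mem_univ i)
  have hle_Lam : ∀ i, dq i ≤ Lam := fun i => Finset.le_sup' _ (Finset.mem_univ i)
  have hcol : ∀ i, G *ᵥ (fun j => Uq j i) = dq i • (fun j => Uq j i) := by
    intro i; rw [hGspec]; exact eigcol Uq hU1 dq i
  have hcolunit : ∀ i, (fun j => Uq j i) ⬝ᵥ (fun j => Uq j i) = 1 := col_unit Uq hU1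
  have heigval : ∀ i, (fun j => Uq j i) ⬝ᵥ (G *ᵥ (fun j => Uq j i)) = dq i := by
    intro i
    rw [hcol i, dotProduct_smul, hcolunit i]
    simp
  have hd_nonneg : ∀ i, 0 ≤ dq i := by
    intro i
    rw [← heigval i, hXquad]
    exact dot_self_nonneg _
  have hrankX : X.rank = r := by
    rw [← Matrix.rank_self_mul_transpose X, ← hM]
    exact hrank
  have hXinj : ∀ v : Fin r → ℝ, X *ᵥ v = 0 → v = 0 := by
    intro v hv
    have hker : LinearMap.ker X.mulVecLin = ⊥ := by
      have hfr := X.mulVecLin.finrank_range_add_finrank_ker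
      rw [Module.finrank_fin_fun] at hfr
      have hrn : Module.finrank ℝ (LinearMap.range X.mulVecLin) = r := hrankX
      have hk0 : Module.finrank ℝ (LinearMap.ker X.mulVecLin) = 0 := by omega
      exact Submodule.finrank_eq_zero.1 hk0
    have hv' : X.mulVecLin v = 0 := by simpa [Matrix.mulVecLin_apply] using hv
    exact (LinearMap.map_eq_zero_iff _ (LinearMap.ker_eq_bot.1 hker)).1 hv'
  have hlam_pos : 0 < lam := by
    obtain ⟨i₀, -, hi₀⟩ := Finset.exists_mem_eq_inf' hne dq
    rcases lt_or_eq_of_le (hd_nonneg i₀) with h | h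
    · rw [hlamdef, hi₀]; exact h
    · exfalso
      have hG0 : G *ᵥ (fun j => Uq j i₀) = 0 := by rw [hcol i₀, ← h, zero_smul]
      have hq0 : (X *ᵥ (fun j => Uq j i₀)) ⬝ᵥ (X *ᵥ (fun j => Uq j i₀)) = 0 := by
        rw [← hXquad, hG0, dotProduct_zero]
      have hx0 : X *ᵥ (fun j => Uq j i₀) = 0 := dotProduct_self_eq_zero.1 hq0
      have h1 := hXinj _ hx0
      have h2 := hcolunit i₀
      rw [h1] at h2
      simp at h2
  have hLam_pos : 0 < Lam := lt_of_lt_of_le hlam_pos (le_trans (hlam_le ⟨0, hr⟩) (hle_Lam ⟨0, hr⟩))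
  -- quadratic bounds
  have hq1 : ∀ v : Fin r → ℝ, lam * (v ⬝ᵥ v) ≤ v ⬝ᵥ (G *ᵥ v) := by
    intro v
    rw [hGspec, quad_of_decomp]
    rw [dot_self_eq_sum_sq, ← norm_of_decomp Uq hU2 v, Finset.mul_sum]
    apply Finset.sum_le_sum; intro i _
    exact mul_le_mul_of_nonneg_right (hlam_le i) (sq_nonneg _)
  have hGsym : Gᵀ = G := by
    rw [hGdef, Matrix.transpose_mul, Matrix.transpose_transpose]
  have hq3 : ∀ w : Fin r → ℝ, lam^2 * (w ⬝ᵥ (G *ᵥ w)) ≤ (G *ᵥ w) ⬝ᵥ (G *ᵥ (G *ᵥ w)) := by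
    intro w
    have hG3 : (G *ᵥ w) ⬝ᵥ (G *ᵥ (G *ᵥ w))
        = w ⬝ᵥ ((Uq * Matrix.diagonal (fun i => dq i * dq i * dq i) * Uqᵀ) *ᵥ w) := by
      rw [mulVec_dot_right, hGsym, Matrix.mulVec_mulVec, Matrix.mulVec_mulVec]
      rw [hGspec, decomp_mul Uq hU1, decomp_mul Uq hU1]
    rw [hG3, hGspec, quad_of_decomp, quad_of_decomp, Finset.mul_sum]
    apply Finset.sum_le_sum; intro i _
    have hdd : lam^2 ≤ dq i * dq i := by nlinarith [hlam_le i, hlam_pos.le]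
    nlinarith [mul_le_mul_of_nonneg_right hdd
      (mul_nonneg (hd_nonneg i) (sq_nonneg ((Uqᵀ *ᵥ w) i)))]
  -- F2 M ≤ r Lam²
  have hF2M : mip M M = ∑ i, (dq i)^2 := by
    rw [hM, mip_mul_mul_transpose, ← hGdef, hGspec, F2_decomp Uq hU1]
  have hF2M_le : mip M M ≤ (r:ℝ) * Lam^2 := by
    rw [hF2M]
    calc ∑ i, (dq i)^2 ≤ ∑ _i : Fin r, Lam^2 :=
          Finset.sum_le_sum fun i _ => by nlinarith [hd_nonneg i, hle_Lam i]
      _ = (r:ℝ) * Lam^2 := by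
          rw [Finset.sum_const, Finset.card_univ, Fintype.card_fin, nsmul_eq_mul]
  -- sval facts
  have hrange : Module.finrank ℝ (LinearMap.range X.mulVecLin) = r := hrankX
  have hΛsv : Lam ≤ sval M 1 := by
    obtain ⟨imax, -, himax⟩ := Finset.exists_mem_eq_sup' hne dq
    rw [hM]
    refine sval_one_ge X Lam hLam_pos (fun j => Uq j imax) ?_ (hcolunit imax)
    rw [← hGdef, hcol imax, ← himax, ← hLamdef]
  have hsvr_le : sval M r ≤ lam := by
    obtain ⟨imin, -, himin⟩ := Finset.exists_mem_eq_inf' hne dq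
    rw [hM]
    refine sval_M_r_le X hr lam hlam_pos hrange (fun j => Uq j imin) ?_ (hcolunit imin)
    rw [← hGdef, hcol imin, ← himin, ← hlamdef]
  have hsvr_ge : lam ≤ sval M r := by
    rw [hM]
    refine sval_M_r_ge X hr lam hlam_pos.le hrange ?_
    intro w
    rw [← hGdef]
    exact hq3 w
  have hsX : Real.sqrt lam ≤ sval X r := by
    refine sval_Xr_ge hr X lam hlam_pos.le ?_
    intro v
    rw [← hXquad v]
    exact hq1 v
  -- numeric chain : frob E small
  set E := Mt T₀ - M with hE
  have hF2E : mip E E ≤ (1/9:ℝ)^T₀ * mip M M := decay T₀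
  have hrpos : (0:ℝ) < (r:ℝ) := by exact_mod_cast hr
  have hsqrtr_pos : 0 < Real.sqrt r := Real.sqrt_pos.2 hrpos
  have hfrobE : frob E ≤ Real.exp (-2 : ℝ) * lam := by
    have h1 : frob E ≤ (1/3:ℝ)^T₀ * (Real.sqrt r * Lam) := by
      rw [frob_eq]
      have hnine : ((1/3:ℝ)^T₀)^2 = (1/9:ℝ)^T₀ := by
        rw [← pow_mul, pow_mul']
        norm_num
      have h2 : mip E E ≤ ((1/3:ℝ)^T₀ * (Real.sqrt r * Lam))^2 := by
        have heq : ((1/3:ℝ)^T₀ * (Real.sqrt r * Lam))^2 = (1/9:ℝ)^T₀ * ((r:ℝ) * Lam^2) := by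
          rw [mul_pow, mul_pow, hnine, Real.sq_sqrt hrpos.le]
        rw [heq]
        calc mip E E ≤ (1/9:ℝ)^T₀ * mip M M := hF2E
          _ ≤ (1/9:ℝ)^T₀ * ((r:ℝ) * Lam^2) := by
              apply mul_le_mul_of_nonneg_left hF2M_le (by positivity)
      calc Real.sqrt (mip E E) ≤ Real.sqrt (((1/3:ℝ)^T₀ * (Real.sqrt r * Lam))^2) :=
            Real.sqrt_le_sqrt h2
        _ = (1/3:ℝ)^T₀ * (Real.sqrt r * Lam) := Real.sqrt_sq (by positivity)
    have h3 : ((1:ℝ)/3)^T₀ ≤ Real.exp (-(T₀:ℝ)) := by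
      have hbase : (1:ℝ)/3 ≤ Real.exp (-1) := by
        rw [Real.exp_neg]
        have hlt := Real.exp_one_lt_d9
        have hpos : (0:ℝ) < Real.exp 1 := Real.exp_pos 1
        rw [div_le_iff₀ (by norm_num : (0:ℝ) < 3)]
        rw [inv_mul_eq_div, le_div_iff₀ hpos]
        nlinarith
      calc ((1:ℝ)/3)^T₀ ≤ (Real.exp (-1))^T₀ :=
            pow_le_pow_left₀ (by norm_num) hbase T₀
        _ = Real.exp (-(T₀:ℝ)) := by
            rw [← Real.exp_nat_mul]
            congr 1
            ring
    have harg_pos : (0:ℝ) < Real.sqrt r * (Lam / lam) := by positivity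
    have h4 : Real.log (Real.sqrt r * (Lam/lam)) + 2 ≤ (T₀:ℝ) := by
      refine le_trans ?_ hT
      have hmono : Real.sqrt r * (Lam/lam) ≤ Real.sqrt r * (sval M 1 / sval M r) := by
        apply mul_le_mul_of_nonneg_left ?_ (Real.sqrt_nonneg _)
        exact div_le_div₀ (by linarith) hΛsv (by linarith) hsvr_le
      have hlog := Real.log_le_log harg_pos hmono
      linarith
    have h5 : Real.exp (-(T₀:ℝ)) ≤ Real.exp (-(Real.log (Real.sqrt r * (Lam/lam)) + 2)) := by
      apply Real.exp_le_exp.2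
      linarith
    have h6 : Real.exp (-(Real.log (Real.sqrt r * (Lam/lam)) + 2)) * (Real.sqrt r * Lam)
        = Real.exp (-2:ℝ) * lam := by
      rw [neg_add, Real.exp_add, Real.exp_neg, Real.exp_log harg_pos]
      field_simp
    calc frob E ≤ (1/3:ℝ)^T₀ * (Real.sqrt r * Lam) := h1
      _ ≤ Real.exp (-(T₀:ℝ)) * (Real.sqrt r * Lam) := by
          apply mul_le_mul_of_nonneg_right h3 (by positivity)
      _ ≤ Real.exp (-(Real.log (Real.sqrt r * (Lam/lam)) + 2)) * (Real.sqrt r * Lam) := by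
          apply mul_le_mul_of_nonneg_right h5 (by positivity)
      _ = Real.exp (-2:ℝ) * lam := h6
  have hexp2 : Real.exp (-2:ℝ) ≤ 19/100 := by
    rw [Real.exp_neg]
    have hgt := Real.exp_one_gt_d9
    have he2 : Real.exp 2 = Real.exp 1 * Real.exp 1 := by
      rw [← Real.exp_add]; norm_num
    have h100 : (100:ℝ)/19 ≤ Real.exp 2 := by
      rw [he2]; nlinarith [hgt, Real.exp_pos 1]
    calc (Real.exp 2)⁻¹ ≤ ((100:ℝ)/19)⁻¹ := by
          apply inv_anti₀ (by norm_num) h100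
      _ = 19/100 := by norm_num
  have hfrobE' : frob E ≤ (19/100) * lam := by
    calc frob E ≤ Real.exp (-2:ℝ) * lam := hfrobE
      _ ≤ (19/100) * lam := by nlinarith [hlam_pos]
  -- Procrustes construction
  set S₀ := Xᵀ * U₀ with hS₀
  have hU₀M : U₀ * U₀ᵀ = M + E := by rw [hU₀, hE]; abel
  have hS₀S₀ : S₀ * S₀ᵀ = G * G + Xᵀ * E * X := by
    rw [hS₀, Matrix.transpose_mul, Matrix.transpose_transpose]
    calc Xᵀ * U₀ * (U₀ᵀ * X) = Xᵀ * (U₀ * U₀ᵀ) * X := by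
          rw [Matrix.mul_assoc, Matrix.mul_assoc, Matrix.mul_assoc]
      _ = Xᵀ * (M + E) * X := by rw [hU₀M]
      _ = Xᵀ * M * X + Xᵀ * E * X := by rw [Matrix.mul_add, Matrix.add_mul]
      _ = G * G + Xᵀ * E * X := by
          rw [hM, hGdef]
          congr 1
          rw [Matrix.mul_assoc, Matrix.mul_assoc, Matrix.mul_assoc]
  have hquadS₀ : ∀ v : Fin r → ℝ, (81/100)*lam^2*(v ⬝ᵥ v) ≤ v ⬝ᵥ ((S₀ * S₀ᵀ) *ᵥ v) := by
    intro v
    rw [hS₀S₀]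
    have hG2 : lam * (v ⬝ᵥ (G *ᵥ v)) ≤ v ⬝ᵥ ((G*G) *ᵥ v) := by
      rw [hGspec, decomp_mul Uq hU1, quad_of_decomp, quad_of_decomp, Finset.mul_sum]
      apply Finset.sum_le_sum; intro i _
      nlinarith [mul_le_mul_of_nonneg_right (hlam_le i)
        (mul_nonneg (hd_nonneg i) (sq_nonneg ((Uqᵀ *ᵥ v) i)))]
    have hXE : -(frob E * (v ⬝ᵥ (G *ᵥ v))) ≤ v ⬝ᵥ ((Xᵀ * E * X) *ᵥ v) := by
      have h1 : v ⬝ᵥ ((Xᵀ * E * X) *ᵥ v) = (X *ᵥ v) ⬝ᵥ (E *ᵥ (X *ᵥ v)) := by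
        rw [← Matrix.mulVec_mulVec, ← Matrix.mulVec_mulVec, dot_mulVec_left,
          Matrix.transpose_transpose]
      rw [h1, hXquad v]
      exact quad_ge_neg_frob E (X *ᵥ v)
    have hGv := hq1 v
    have hGvnn : 0 ≤ v ⬝ᵥ (G *ᵥ v) := by nlinarith [dot_self_nonneg v, hlam_pos]
    have hadd : v ⬝ᵥ ((G*G + Xᵀ*E*X) *ᵥ v) = v ⬝ᵥ ((G*G) *ᵥ v) + v ⬝ᵥ ((Xᵀ*E*X) *ᵥ v) := by
      rw [Matrix.add_mulVec, dotProduct_add]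
    rw [hadd]
    have p1 : (81/100)*lam * (v ⬝ᵥ (G *ᵥ v)) ≤ (lam - frob E) * (v ⬝ᵥ (G *ᵥ v)) :=
      mul_le_mul_of_nonneg_right (by linarith [hfrobE']) hGvnn
    have p2 : (81/100)*lam * (lam * (v ⬝ᵥ v)) ≤ (81/100)*lam * (v ⬝ᵥ (G *ᵥ v)) :=
      mul_le_mul_of_nonneg_left hGv (by positivity)
    nlinarith [p1, p2, hG2, hXE]
  set Psq := S₀ * S₀ᵀ with hPsq
  have hPsqherm : Psq.IsHermitian := by
    unfold Matrix.IsHermitian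
    rw [Matrix.conjTranspose_eq_transpose_of_trivial, hPsq, Matrix.transpose_mul,
      Matrix.transpose_transpose]
  obtain ⟨Wm, dp, hW1, hW2, hPspec⟩ := exists_spectral Psq hPsqherm
  have hdp_ge : ∀ i, (81/100)*lam^2 ≤ dp i := by
    intro i
    have h1 : Psq *ᵥ (fun j => Wm j i) = dp i • (fun j => Wm j i) := by
      rw [hPspec]; exact eigcol Wm hW1 dp i
    have h2 := hquadS₀ (fun j => Wm j i)
    rw [h1, dotProduct_smul, col_unit Wm hW1 i] at h2
    simpa using h2
  have hdp_pos : ∀ i, 0 < dp i := fun i => lt_of_lt_of_le (by positivity) (hdp_ge i)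
  set sdp := fun i => Real.sqrt (dp i) with hsdp
  have hsdp_pos : ∀ i, 0 < sdp i := fun i => Real.sqrt_pos.2 (hdp_pos i)
  have hsdp_ge : ∀ i, (9/10)*lam ≤ sdp i := by
    intro i
    have hsq9 : ((9:ℝ)/10*lam)^2 ≤ dp i := by
      calc ((9:ℝ)/10*lam)^2 = 81/100*lam^2 := by ring
        _ ≤ dp i := hdp_ge i
    calc (9:ℝ)/10*lam = Real.sqrt (((9:ℝ)/10*lam)^2) := (Real.sqrt_sq (by positivity)).symm
      _ ≤ sdp i := Real.sqrt_le_sqrt hsq9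
  set P' := Wm * Matrix.diagonal sdp * Wmᵀ with hP'
  set Pinv := Wm * Matrix.diagonal (fun i => (sdp i)⁻¹) * Wmᵀ with hPinv
  have hPP : P' * P' = Psq := by
    rw [hP', decomp_mul Wm hW1, hPspec]
    have : (fun i => sdp i * sdp i) = dp := by
      funext i; exact Real.mul_self_sqrt (hdp_pos i).le
    rw [this]
  have hPinvP : Pinv * P' = 1 := by
    rw [hPinv, hP', decomp_mul Wm hW1]
    have : (fun i => (sdp i)⁻¹ * sdp i) = fun _ => (1:ℝ) := by
      funext i; exact inv_mul_cancel₀ (hsdp_pos i).ne'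
    rw [this, Matrix.diagonal_one, Matrix.mul_one, hW2]
  have hPPinv : P' * Pinv = 1 := mul_eq_one_comm.1 hPinvP
  have hPinvsym : Pinvᵀ = Pinv := by
    rw [hPinv]
    simp only [Matrix.transpose_mul, Matrix.transpose_transpose, Matrix.diagonal_transpose,
      Matrix.mul_assoc]
  set Rm := Pinv * S₀ with hRm
  have hPR : P' * Rm = S₀ := by rw [hRm, ← Matrix.mul_assoc, hPPinv, Matrix.one_mul]
  have hRR : Rmᵀ * Rm = 1 := by
    have hB : (Pinv * Pinv) * Psq = 1 := by
      rw [← hPP]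
      calc Pinv * Pinv * (P' * P') = Pinv * (Pinv * P' * P') := by simp only [Matrix.mul_assoc]
        _ = 1 := by rw [hPinvP, Matrix.one_mul, hPinvP]
    have hS₀inv : S₀ * (S₀ᵀ * (Pinv * Pinv)) = 1 := by
      have h := mul_eq_one_comm.1 hB
      rw [hPsq] at h
      calc S₀ * (S₀ᵀ * (Pinv * Pinv)) = (S₀ * S₀ᵀ) * (Pinv * Pinv) := by
            rw [← Matrix.mul_assoc S₀ S₀ᵀ (Pinv * Pinv)]
        _ = 1 := h
    have h2 := mul_eq_one_comm.1 hS₀inv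
    calc Rmᵀ * Rm = (S₀ᵀ * Pinvᵀ) * (Pinv * S₀) := by rw [hRm, Matrix.transpose_mul]
      _ = (S₀ᵀ * (Pinv * Pinv)) * S₀ := by rw [hPinvsym]; simp only [Matrix.mul_assoc]
      _ = 1 := h2
  have hRR' : Rm * Rmᵀ = 1 := mul_eq_one_comm.1 hRR
  set Vm := X * Rm with hVm
  have hVV : Vm * Vmᵀ = M := by
    rw [hVm, Matrix.transpose_mul]
    calc X * Rm * (Rmᵀ * Xᵀ) = X * (Rm * Rmᵀ) * Xᵀ := by simp only [Matrix.mul_assoc]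
      _ = M := by rw [hRR', Matrix.mul_one, hM]
  set S := Vmᵀ * U₀ with hS
  have hSR : S = Rmᵀ * S₀ := by
    rw [hS, hVm, Matrix.transpose_mul, Matrix.mul_assoc, ← hS₀]
  have hP'sym : P'ᵀ = P' := by
    rw [hP']
    simp only [Matrix.transpose_mul, Matrix.transpose_transpose, Matrix.diagonal_transpose,
      Matrix.mul_assoc]
  have hSsym : Sᵀ = S := by
    rw [hSR, ← hPR]
    rw [Matrix.transpose_mul, Matrix.transpose_mul, Matrix.transpose_transpose, hP'sym]
    simp only [Matrix.mul_assoc]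
  have hSquad : ∀ v : Fin r → ℝ, (9/10)*lam*(v ⬝ᵥ v) ≤ v ⬝ᵥ (S *ᵥ v) := by
    intro v
    rw [hSR, ← hPR]
    have h1 : (Rm *ᵥ v) ⬝ᵥ (P' *ᵥ (Rm *ᵥ v)) = v ⬝ᵥ ((Rmᵀ * (P' * Rm)) *ᵥ v) := by
      rw [mulVec_dot_right, Matrix.mulVec_mulVec, Matrix.mulVec_mulVec,
        Matrix.mul_assoc Rmᵀ P' Rm]
    have h2 : (Rm *ᵥ v) ⬝ᵥ (Rm *ᵥ v) = v ⬝ᵥ v := by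
      rw [mulVec_dot_right, Matrix.mulVec_mulVec, hRR, Matrix.one_mulVec]
    have h3 : (9/10)*lam * ((Rm *ᵥ v) ⬝ᵥ (Rm *ᵥ v)) ≤ (Rm *ᵥ v) ⬝ᵥ (P' *ᵥ (Rm *ᵥ v)) := by
      rw [hP', quad_of_decomp]
      rw [dot_self_eq_sum_sq, ← norm_of_decomp Wm hW2 (Rm *ᵥ v), Finset.mul_sum]
      apply Finset.sum_le_sum; intro i _
      exact mul_le_mul_of_nonneg_right (hsdp_ge i) (sq_nonneg _)
    rw [← h1, ← h2]
    exact h3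
  -- final chain
  set Δm := U₀ - Vm with hΔ
  have hEUV : E = U₀ * U₀ᵀ - Vm * Vmᵀ := by rw [hU₀, hVV]
  have hF2E_id : mip E E
      = mip (U₀ᵀ*U₀) (U₀ᵀ*U₀) + mip (Vmᵀ*Vm) (Vmᵀ*Vm) - 2 * mip S S := by
    rw [hEUV, F2_sub, mip_mul_mul_transpose U₀ U₀, mip_mul_mul_transpose U₀ Vm,
      mip_mul_mul_transpose Vm Vm]
    have hflip : mip (U₀ᵀ*Vm) (U₀ᵀ*Vm) = mip S S := by
      rw [hS, ← mip_transpose (Vmᵀ*U₀) (Vmᵀ*U₀), Matrix.transpose_mul,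
        Matrix.transpose_transpose]
    rw [hflip]
    ring
  have hDtD : Δmᵀ * Δm = U₀ᵀ*U₀ - S - S + Vmᵀ*Vm := by
    have hST : (Vmᵀ*U₀)ᵀ = U₀ᵀ*Vm := by
      rw [Matrix.transpose_mul, Matrix.transpose_transpose]
    have hS2 : U₀ᵀ*Vm = S := by rw [← hST, hS, hSsym]
    rw [hΔ, Matrix.transpose_sub, Matrix.sub_mul, Matrix.mul_sub, Matrix.mul_sub, hS2, ← hS]
    abel
  have hkey : 2 * mip (Δmᵀ * Δm) S ≤ mip E E := by
    have hmipΔ : mip (Δmᵀ * Δm) S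
        = mip (U₀ᵀ*U₀) S + mip (Vmᵀ*Vm) S - 2 * mip S S := by
      rw [hDtD, mip_add_left, mip_sub_left, mip_sub_left]
      ring
    have e1 := F2_sub (U₀ᵀ*U₀) S
    have e2 := F2_sub (Vmᵀ*Vm) S
    have h1 := mip_self_nonneg (U₀ᵀ*U₀ - S)
    have h2 := mip_self_nonneg (Vmᵀ*Vm - S)
    rw [hF2E_id, hmipΔ]
    linarith
  have hΔS : (9/10)*lam * mip Δm Δm ≤ mip (Δmᵀ * Δm) S := by
    rw [mip_transpose_mul, mip_self_diag, Finset.mul_sum]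
    apply Finset.sum_le_sum; intro i _
    exact hSquad _
  have hmipΔΔ : mip Δm Δm ≤ lam/16 := by
    have h1 : mip E E ≤ ((19/100)*lam)^2 := by
      rw [← frob_sq]
      nlinarith [frob_nonneg E, hfrobE']
    nlinarith [hkey, hΔS, hlam_pos, mip_self_nonneg Δm]
  have hfrobΔ : frob Δm ≤ (1/4) * Real.sqrt lam := by
    rw [frob_eq]
    calc Real.sqrt (mip Δm Δm) ≤ Real.sqrt (lam/16) := Real.sqrt_le_sqrt hmipΔΔ
      _ = (1/4) * Real.sqrt lam := by
          rw [show (lam/16 : ℝ) = (1/4:ℝ)^2 * lam by ring, Real.sqrt_mul (by positivity) lam,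
            Real.sqrt_sq (by norm_num : (0:ℝ) ≤ 1/4)]
  have hpd : pdist U₀ X ≤ frob Δm := by
    unfold pdist
    apply csInf_le
    · exact ⟨0, by rintro dd ⟨Rq, hRq, rfl⟩; exact frob_nonneg _⟩
    · exact ⟨Rm, hRR, by rw [hΔ, hVm]⟩
  calc pdist U₀ X ≤ frob Δm := hpd
    _ ≤ (1/4) * Real.sqrt lam := hfrobΔ
    _ ≤ (1/4) * sval X r := by linarith [hsX]
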